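/- arXiv:1410.0856 — 9 statements merged into one kernel-verified Lean document; each statement's English description precedes it below -/
import Mathlib

section
/- The set of planar n×n rook matrices is a submonoid of the rook monoid: the identity matrix is planar, and the product of two planar rook matrices is again a planar rook matrix. -/
/-- An `n × n` matrix with natural number entries is a *rook matrix* if all of its
entries lie in `{0, 1}`, it has at most one entry equal to `1` in each row, and
at most one entry equal to `1` in each column. -/
def IsRookMatrix {n : ℕ} (A : Matrix (Fin n) (Fin n) ℕ) : Prop :=
  (∀ i j, A i j = 0 ∨ A i j = 1) ∧
  (∀ i j j', A i j = 1 → A i j' = 1 → j = j') ∧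
  (∀ i i' j, A i j = 1 → A i' j = 1 → i = i')

/-- A rook matrix `A` is *planar* if whenever `A i j = 1` and `A i' j' = 1` with
`i < i'`, then `j < j'`. -/
def IsPlanarRookMatrix {n : ℕ} (A : Matrix (Fin n) (Fin n) ℕ) : Prop :=
  IsRookMatrix A ∧
  ∀ i i' j j', A i j = 1 → A i' j' = 1 → i < i' → j < j'

lemma sum01 {n : ℕ} (f : Fin n → ℕ) (h0 : ∀ k, f k = 0 ∨ f k = 1)
    (h1 : ∀ k k', f k = 1 → f k' = 1 → k = k') :
    ((∑ k, f k = 0 ∨ ∑ k, f k = 1) ∧ (∑ k, f k = 1 ↔ ∃ k, f k = 1)) := by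
  by_cases h : ∃ k, f k = 1
  · obtain ⟨k0, hk0⟩ := h
    have hs : ∑ k, f k = f k0 := by
      apply Finset.sum_eq_single
      · intro b _ hb
        rcases h0 b with h' | h'
        · exact h'
        · exact absurd (h1 b k0 h' hk0) hb
      · intro hb; exact absurd (Finset.mem_univ k0) hb
    rw [hs, hk0]
    exact ⟨Or.inr rfl, ⟨fun _ => ⟨k0, hk0⟩, fun _ => rfl⟩⟩
  · have hs : ∑ k, f k = 0 := by
      apply Finset.sum_eq_zero
      intro k _
      rcases h0 k with h' | h'
      · exact h'
      · exact absurd ⟨k, h'⟩ h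
    rw [hs]
    refine ⟨Or.inl rfl, ⟨fun h' => absurd h' (by simp), fun ⟨k, hk⟩ => absurd ⟨k, hk⟩ h⟩⟩

lemma nat_mul_eq_one {a b : ℕ} : a * b = 1 ↔ a = 1 ∧ b = 1 := by
  constructor
  · intro h
    have ha : a ≠ 0 := by rintro rfl; simp at h
    have hb : b ≠ 0 := by rintro rfl; simp at h
    exact (mul_eq_one_iff_of_one_le (Nat.one_le_iff_ne_zero.2 ha)
      (Nat.one_le_iff_ne_zero.2 hb)).1 h
  · rintro ⟨rfl, rfl⟩; simp

lemma mul_entry_one {n : ℕ} {A B : Matrix (Fin n) (Fin n) ℕ}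
    (hA : IsRookMatrix A) (hB : IsRookMatrix B) (i j : Fin n) :
    (((A * B) i j = 0 ∨ (A * B) i j = 1) ∧
      ((A * B) i j = 1 ↔ ∃ k, A i k = 1 ∧ B k j = 1)) := by
  have hmul : (A * B) i j = ∑ k, A i k * B k j := by
    simp [Matrix.mul_apply]
  have h0 : ∀ k, A i k * B k j = 0 ∨ A i k * B k j = 1 := by
    intro k
    rcases hA.1 i k with h | h <;> rcases hB.1 k j with h' | h' <;> simp [h, h']
  have h1 : ∀ k k', A i k * B k j = 1 → A i k' * B k' j = 1 → k = k' := by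
    intro k k' hk hk'
    rw [nat_mul_eq_one] at hk hk'
    exact hA.2.1 i k k' hk.1 hk'.1
  obtain ⟨hs01, hsiff⟩ := sum01 _ h0 h1
  rw [hmul]
  refine ⟨hs01, hsiff.trans ?_⟩
  constructor
  · rintro ⟨k, hk⟩; rw [nat_mul_eq_one] at hk; exact ⟨k, hk⟩
  · rintro ⟨k, hk1, hk2⟩; exact ⟨k, by rw [hk1, hk2]⟩

/-- The set of planar `n × n` rook matrices is a submonoid of the rook monoid:
the identity matrix is planar, and the product of two planar rook matrices is
again a planar rook matrix. -/
theorem planar_rook_matrices_submonoid (n : ℕ) :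
    IsPlanarRookMatrix (1 : Matrix (Fin n) (Fin n) ℕ) ∧
    ∀ A B : Matrix (Fin n) (Fin n) ℕ,
      IsPlanarRookMatrix A → IsPlanarRookMatrix B → IsPlanarRookMatrix (A * B) := by
  constructor
  · refine ⟨⟨?_, ?_, ?_⟩, ?_⟩
    · intro i j
      by_cases h : i = j <;> simp [Matrix.one_apply, h]
    · intro i j j' h h'
      rw [Matrix.one_apply] at h h'
      split_ifs at h h' with h1 h2
      exact h1.symm.trans h2
    · intro i i' j h h'
      rw [Matrix.one_apply] at h h'
      split_ifs at h h' with h1 h2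
      exact h1.trans h2.symm
    · intro i i' j j' h h' hlt
      rw [Matrix.one_apply] at h h'
      split_ifs at h h' with h1 h2
      rwa [← h1, ← h2]
  · rintro A B ⟨hA, hAp⟩ ⟨hB, hBp⟩
    refine ⟨⟨?_, ?_, ?_⟩, ?_⟩
    · intro i j; exact (mul_entry_one hA hB i j).1
    · intro i j j' h h'
      obtain ⟨k, hk1, hk2⟩ := (mul_entry_one hA hB i j).2.mp h
      obtain ⟨k', hk1', hk2'⟩ := (mul_entry_one hA hB i j').2.mp h'
      have := hA.2.1 i k k' hk1 hk1'
      subst this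
      exact hB.2.1 k j j' hk2 hk2'
    · intro i i' j h h'
      obtain ⟨k, hk1, hk2⟩ := (mul_entry_one hA hB i j).2.mp h
      obtain ⟨k', hk1', hk2'⟩ := (mul_entry_one hA hB i' j).2.mp h'
      have := hB.2.2 k k' j hk2 hk2'
      subst this
      exact hA.2.2 i i' k hk1 hk1'
    · intro i i' j j' h h' hlt
      obtain ⟨k, hk1, hk2⟩ := (mul_entry_one hA hB i j).2.mp h
      obtain ⟨k', hk1', hk2'⟩ := (mul_entry_one hA hB i' j').2.mp h'
      exact hBp k k' j j' hk2 hk2' (hAp i i' k k' hk1 hk1' hlt)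
end

section
/- For every n ∈ ℕ, the number of planar n×n rook matrices equals ∑_{k=0}^{n} C(n,k)², where C(n,k) is the binomial coefficient. (Equivalently, the dimension over ℂ of the planar rook algebra ℂP_n, which has the planar rook matrices as a basis, is ∑_{k=0}^{n} C(n,k)².) -/
open Finset

namespace PlanarRookAux

variable {n : ℕ}

/-- The matrix associated to an order isomorphism between two subsets. -/
def mkMat (S T : Finset (Fin n)) (e : {x // x ∈ S} ≃o {x // x ∈ T}) :
    Matrix (Fin n) (Fin n) ℕ :=
  fun i j => if hi : i ∈ S then (if ((e ⟨i, hi⟩ : {x // x ∈ T}) : Fin n) = j then 1 else 0) else 0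

/-- The canonical order isomorphism between two finsets of the same cardinality. -/
noncomputable def canonIso (S T : Finset (Fin n)) (h : S.card = T.card) :
    {x // x ∈ S} ≃o {x // x ∈ T} :=
  ((S.orderIsoOfFin rfl).symm.trans (Fin.castOrderIso h)).trans (T.orderIsoOfFin rfl)

theorem mkMat_planar (S T : Finset (Fin n)) (e : {x // x ∈ S} ≃o {x // x ∈ T}) :
    IsPlanarRookMatrix (mkMat S T e) := by
  have hone : ∀ i j, mkMat S T e i j = 1 → ∃ hi : i ∈ S, ((e ⟨i, hi⟩ : {x // x ∈ T}) : Fin n) = j := by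
    intro i j h
    unfold mkMat at h
    split at h
    · split at h
      · exact ⟨‹_›, ‹_›⟩
      · simp at h
    · simp at h
  refine ⟨⟨?_, ?_, ?_⟩, ?_⟩
  · intro i j
    unfold mkMat
    split
    · split
      · right; rfl
      · left; rfl
    · left; rfl
  · intro i j j' h h'
    obtain ⟨hi, hj⟩ := hone _ _ h
    obtain ⟨hi', hj'⟩ := hone _ _ h'
    rw [← hj, ← hj']
  · intro i i' j h h'
    obtain ⟨hi, hj⟩ := hone _ _ h
    obtain ⟨hi', hj'⟩ := hone _ _ h'
    have : e ⟨i, hi⟩ = e ⟨i', hi'⟩ := Subtype.ext (hj.trans hj'.symm)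
    exact congrArg Subtype.val (e.injective this)
  · intro i i' j j' h h' hii
    obtain ⟨hi, hj⟩ := hone _ _ h
    obtain ⟨hi', hj'⟩ := hone _ _ h'
    rw [← hj, ← hj']
    exact e.strictMono (show (⟨i, hi⟩ : {x // x ∈ S}) < ⟨i', hi'⟩ from hii)

/-- Row support. -/
def rows (A : Matrix (Fin n) (Fin n) ℕ) : Finset (Fin n) :=
  @Finset.filter _ (fun i => ∃ j, A i j = 1) (fun _ => Fintype.decidableExistsFintype) univ

/-- Column support. -/
def cols (A : Matrix (Fin n) (Fin n) ℕ) : Finset (Fin n) :=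
  univ.filter (fun j => ∃ i, A i j = 1)

theorem exu {A : Matrix (Fin n) (Fin n) ℕ} (hA : IsPlanarRookMatrix A)
    {i : Fin n} (hi : i ∈ rows A) : ∃! j, A i j = 1 := by
  obtain ⟨j, hj⟩ := ((@mem_filter _ _ (fun _ => Fintype.decidableExistsFintype) _ _).1 hi).2
  exact ⟨j, hj, fun j' hj' => hA.1.2.1 i j' j hj' hj⟩

/-- The matching function of a planar rook matrix. -/
noncomputable def matchFun {A : Matrix (Fin n) (Fin n) ℕ} (hA : IsPlanarRookMatrix A) :
    {x // x ∈ rows A} → {x // x ∈ cols A} :=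
  fun x => ⟨Fintype.choose _ (exu hA x.2), by
    simp only [cols, mem_filter, mem_univ, true_and]
    exact ⟨x.1, Fintype.choose_spec _ (exu hA x.2)⟩⟩

theorem matchFun_spec {A : Matrix (Fin n) (Fin n) ℕ} (hA : IsPlanarRookMatrix A)
    (x : {x // x ∈ rows A}) : A x.1 (matchFun hA x).1 = 1 :=
  Fintype.choose_spec _ (exu hA x.2)

theorem matchFun_strictMono {A : Matrix (Fin n) (Fin n) ℕ} (hA : IsPlanarRookMatrix A) :
    StrictMono (matchFun hA) := by
  intro x y hxy
  exact hA.2 x.1 y.1 _ _ (matchFun_spec hA x) (matchFun_spec hA y) hxy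

theorem matchFun_surjective {A : Matrix (Fin n) (Fin n) ℕ} (hA : IsPlanarRookMatrix A) :
    Function.Surjective (matchFun hA) := by
  rintro ⟨j, hj⟩
  obtain ⟨i, hi⟩ := (mem_filter.1 hj).2
  have hir : i ∈ rows A := by
    simp only [rows, mem_filter, mem_univ, true_and]
    exact ⟨j, hi⟩
  refine ⟨⟨i, hir⟩, Subtype.ext ?_⟩
  exact hA.1.2.1 i _ j (matchFun_spec hA ⟨i, hir⟩) hi

/-- The matching order isomorphism of a planar rook matrix. -/
noncomputable def matchIso {A : Matrix (Fin n) (Fin n) ℕ} (hA : IsPlanarRookMatrix A) :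
    {x // x ∈ rows A} ≃o {x // x ∈ cols A} :=
  StrictMono.orderIsoOfSurjective _ (matchFun_strictMono hA) (matchFun_surjective hA)

theorem card_rows_eq_card_cols {A : Matrix (Fin n) (Fin n) ℕ} (hA : IsPlanarRookMatrix A) :
    (rows A).card = (cols A).card := by
  rw [← Fintype.card_coe, ← Fintype.card_coe]
  exact Fintype.card_congr (matchIso hA).toEquiv

theorem mkMat_rows_cols {A : Matrix (Fin n) (Fin n) ℕ} (hA : IsPlanarRookMatrix A)
    (e : {x // x ∈ rows A} ≃o {x // x ∈ cols A}) : mkMat (rows A) (cols A) e = A := by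
  have he : e = matchIso hA := Subsingleton.elim _ _
  subst he
  funext i j
  unfold mkMat
  split
  · rename_i hi
    have hms : ((matchIso hA ⟨i, hi⟩ : {x // x ∈ cols A}) : Fin n) = (matchFun hA ⟨i, hi⟩).1 := by
      rw [matchIso, StrictMono.coe_orderIsoOfSurjective]
    split
    · rename_i hj
      rw [← hj, hms]
      exact (matchFun_spec hA ⟨i, hi⟩).symm
    · rename_i hj
      rcases hA.1.1 i j with h0 | h1
      · exact h0.symm
      · exact absurd (hms ▸ hA.1.2.1 i _ j (hms ▸ matchFun_spec hA ⟨i, hi⟩) h1) hj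
  · rename_i hi
    rcases hA.1.1 i j with h0 | h1
    · exact h0.symm
    · exact absurd (by simp only [rows, mem_filter, mem_univ, true_and]; exact ⟨j, h1⟩) hi

theorem rows_mkMat (S T : Finset (Fin n)) (e : {x // x ∈ S} ≃o {x // x ∈ T}) :
    rows (mkMat S T e) = S := by
  ext i
  simp only [rows, mem_filter, mem_univ, true_and]
  constructor
  · rintro ⟨j, hj⟩
    unfold mkMat at hj
    split at hj
    · assumption
    · simp at hj
  · intro hi
    refine ⟨(e ⟨i, hi⟩ : {x // x ∈ T}), ?_⟩
    unfold mkMat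
    rw [dif_pos hi, if_pos rfl]

theorem cols_mkMat (S T : Finset (Fin n)) (e : {x // x ∈ S} ≃o {x // x ∈ T}) :
    cols (mkMat S T e) = T := by
  ext j
  simp only [cols, mem_filter, mem_univ, true_and]
  constructor
  · rintro ⟨i, hi⟩
    unfold mkMat at hi
    split at hi
    · split at hi
      · rename_i hj
        exact hj ▸ (e _).2
      · simp at hi
    · simp at hi
  · intro hj
    refine ⟨(e.symm ⟨j, hj⟩ : {x // x ∈ S}), ?_⟩
    unfold mkMat
    rw [dif_pos (e.symm ⟨j, hj⟩).2, if_pos]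
    simp

/-- The equivalence between planar rook matrices and pairs of equal-size subsets. -/
noncomputable def planarEquiv (n : ℕ) :
    {A : Matrix (Fin n) (Fin n) ℕ // IsPlanarRookMatrix A} ≃
      {p : Finset (Fin n) × Finset (Fin n) // p.1.card = p.2.card} where
  toFun A := ⟨(rows A.1, cols A.1), card_rows_eq_card_cols A.2⟩
  invFun p := ⟨mkMat p.1.1 p.1.2 (canonIso p.1.1 p.1.2 p.2), mkMat_planar _ _ _⟩
  left_inv A := Subtype.ext (mkMat_rows_cols A.2 _)
  right_inv p := Subtype.ext (Prod.ext (rows_mkMat _ _ _) (cols_mkMat _ _ _))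

end PlanarRookAux

/-- The number of planar `n × n` rook matrices equals `∑_{k=0}^{n} C(n,k)²`. -/
theorem card_planar_rook_matrices (n : ℕ) :
    Nat.card {A : Matrix (Fin n) (Fin n) ℕ // IsPlanarRookMatrix A} =
      ∑ k ∈ Finset.range (n + 1), Nat.choose n k ^ 2 := by
  classical
  rw [Nat.card_congr (PlanarRookAux.planarEquiv n)]
  rw [Nat.card_eq_fintype_card, Fintype.card_subtype]
  have key : ∀ k : ℕ, (Finset.univ.filter fun T : Finset (Fin n) => T.card = k).card
      = Nat.choose n k := by
    intro k
    rw [← Finset.powerset_univ, ← Finset.powersetCard_eq_filter, Finset.card_powersetCard,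
      Finset.card_univ, Fintype.card_fin]
  calc (Finset.univ.filter fun p : Finset (Fin n) × Finset (Fin n) =>
        p.1.card = p.2.card).card
      = ∑ S : Finset (Fin n), ∑ T : Finset (Fin n),
          (if S.card = T.card then 1 else 0) := by
        rw [Finset.card_filter, ← Finset.univ_product_univ, Finset.sum_product]
    _ = ∑ S : Finset (Fin n), Nat.choose n S.card := by
        refine Finset.sum_congr rfl fun S _ => ?_
        rw [← Finset.card_filter, ← key S.card]
        congr 1
        ext T
        simp [eq_comm]
    _ = ∑ k ∈ Finset.range (n + 1), Nat.choose n k ^ 2 := by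
        rw [← Finset.powerset_univ, Finset.sum_powerset]
        rw [Finset.card_univ, Fintype.card_fin]
        refine Finset.sum_congr rfl fun k hk => ?_
        rw [Finset.sum_congr rfl (fun T hT => by
          rw [(Finset.mem_powersetCard.1 hT).2]), Finset.sum_const, smul_eq_mul,
          Finset.card_powersetCard, Finset.card_univ, Fintype.card_fin, sq]
end

section
/- Fix n ∈ ℕ. Index the standard basis of ℂ^{2^n} by functions f : Fin n → Fin 2, and for each complex number z with |z| = 1 let D_z be the diagonal matrix whose (f,f) diagonal entry is z^{|f^{-1}(1)|}, where |f^{-1}(1)| is the number of indices i with f i = 1. Then the subalgebra of the full matrix algebra M_{2^n}(ℂ) consisting of all matrices x such that D_z x = x D_z for every z on the unit circle is isomorphic as a ℂ-algebra to ∏_{k=0}^{n} M_{C(n,k)}(ℂ), where C(n,k) is the binomial coefficient. -/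
namespace GICAR

variable {n : ℕ}

/-- weight of a 0/1 function -/
def wt {n : ℕ} (f : Fin n → Fin 2) : ℕ := (Finset.univ.filter fun i => f i = 1).card

lemma wt_lt (f : Fin n → Fin 2) : wt f < n + 1 :=
  Nat.lt_succ_of_le (le_trans (Finset.card_filter_le _ _) (by simp))

/-- weight as an element of `Fin (n+1)` -/
def kf (f : Fin n → Fin 2) : Fin (n + 1) := ⟨wt f, wt_lt f⟩

def Dset (n : ℕ) : Set (Matrix (Fin n → Fin 2) (Fin n → Fin 2) ℂ) :=
  {M | ∃ z : ℂ, ‖z‖ = 1 ∧ M = Matrix.diagonal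
      (fun f : Fin n → Fin 2 => z ^ (Finset.univ.filter fun i => f i = 1).card)}

lemma mem_centralizer_iff {M : Matrix (Fin n → Fin 2) (Fin n → Fin 2) ℂ} :
    M ∈ Subalgebra.centralizer ℂ (Dset n) ↔ ∀ f g, wt f ≠ wt g → M f g = 0 := by
  rw [Subalgebra.mem_centralizer_iff]
  constructor
  · intro h f g hfg
    have hprim := Complex.isPrimitiveRoot_exp (n + 1) (Nat.succ_ne_zero n)
    set ζ := Complex.exp (2 * Real.pi * Complex.I / ((n + 1 : ℕ) : ℂ)) with hζ
    have hnorm : ‖ζ‖ = 1 :=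
      Complex.norm_eq_one_of_pow_eq_one hprim.pow_eq_one (Nat.succ_ne_zero n)
    have hD := h (Matrix.diagonal fun f : Fin n → Fin 2 => ζ ^ wt f)
      ⟨ζ, hnorm, rfl⟩
    have := congrFun (congrFun hD f) g
    rw [Matrix.diagonal_mul, Matrix.mul_diagonal] at this
    have hne : ζ ^ wt f ≠ ζ ^ wt g := fun hEq =>
      hfg (hprim.pow_inj (wt_lt f) (wt_lt g) hEq)
    have h0 : (ζ ^ wt f - ζ ^ wt g) * M f g = 0 := by ring_nf; linear_combination this
    rcases mul_eq_zero.mp h0 with h1 | h1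
    · exact absurd (sub_eq_zero.mp h1) hne
    · exact h1
  · rintro h _ ⟨z, -, rfl⟩
    ext f g
    rw [Matrix.diagonal_mul, Matrix.mul_diagonal]
    by_cases hfg : wt f = wt g
    · rw [show (Finset.univ.filter fun i => f i = 1).card = wt f from rfl,
        show (Finset.univ.filter fun i => g i = 1).card = wt g from rfl, hfg, mul_comm]
    · rw [h f g hfg, mul_zero, zero_mul]

/-- the fiber of weight `k` -/
abbrev Fib (n : ℕ) (k : Fin (n + 1)) : Type := {f : Fin n → Fin 2 // wt f = (k : ℕ)}

lemma card_fib (k : Fin (n + 1)) : Fintype.card (Fib n k) = n.choose k := by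
  have e : Fib n k ≃ {s : Finset (Fin n) // s.card = (k : ℕ)} := by
    refine
      { toFun := fun f => ⟨Finset.univ.filter fun i => f.1 i = 1, f.2⟩
        invFun := fun s => ⟨fun i => if i ∈ s.1 then 1 else 0, ?_⟩
        left_inv := ?_
        right_inv := ?_ }
    · have hs : (Finset.univ.filter fun i => (if i ∈ s.1 then (1 : Fin 2) else 0) = 1)
          = s.1 := by
        ext i
        simp only [Finset.mem_filter, Finset.mem_univ, true_and]
        split <;> simp_all
      show (Finset.univ.filter _).card = _
      rw [hs, s.2]
    · intro f
      apply Subtype.ext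
      funext i
      simp only [Finset.mem_filter, Finset.mem_univ, true_and]
      split <;> omega
    · intro s
      apply Subtype.ext
      ext i
      simp only [Finset.mem_filter, Finset.mem_univ, true_and]
      split <;> simp_all
  rw [Fintype.card_congr e, Fintype.card_finset_len, Fintype.card_fin]

/-- first isomorphism: centralizer to block matrices over fibers -/
noncomputable def toBlocks :
    (Subalgebra.centralizer ℂ (Dset n)) ≃ₐ[ℂ]
      ∀ k : Fin (n + 1), Matrix (Fib n k) (Fib n k) ℂ where
  toFun M := fun k a b => M.1 a.1 b.1
  invFun B := ⟨fun f g => if h : kf f = kf g then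
      B (kf g) ⟨f, congrArg Fin.val h⟩ ⟨g, rfl⟩ else 0, by
    refine mem_centralizer_iff.mpr ?_
    intro f g hfg
    exact dif_neg fun h => hfg (congrArg Fin.val h)⟩
  left_inv := by
    intro M
    apply Subtype.ext
    funext f g
    dsimp only
    by_cases h : kf f = kf g
    · exact dif_pos h
    · rw [dif_neg h]
      exact (mem_centralizer_iff.mp M.2 f g fun hw => h (Fin.ext hw)).symm
  right_inv := by
    intro B
    funext k a b
    obtain ⟨a, ha⟩ := a
    obtain ⟨b, hb⟩ := b
    dsimp only
    have hk : kf b = k := Fin.ext hb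
    subst hk
    rw [dif_pos (Fin.ext ha : kf a = kf b)]
  map_mul' := by
    intro M N
    funext k a b
    show (M.1 * N.1) a.1 b.1 = _
    simp only [Pi.mul_apply, Matrix.mul_apply]
    rw [← Finset.sum_filter_of_ne (p := fun f => wt f = (k : ℕ))
      (fun f _ hne => by
        by_contra hw
        exact hne (by
          rw [mem_centralizer_iff.mp M.2 a.1 f (by rw [a.2]; exact fun h => hw h.symm),
            zero_mul]))]
    exact (Finset.sum_subtype _ (fun f => by simp) fun f => M.1 a.1 f * N.1 f b.1)
  map_add' := by intro M N; rfl
  commutes' := by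
    intro r
    funext k a b
    show (algebraMap ℂ _ r : Matrix (Fin n → Fin 2) (Fin n → Fin 2) ℂ) a.1 b.1 = _
    simp [Pi.algebraMap_apply, Matrix.algebraMap_matrix_apply, Subtype.ext_iff]

end GICAR

/-- The gauge-invariant CAR algebra at level `n`.

Index the standard basis of `ℂ^{2^n}` by functions `f : Fin n → Fin 2`, and for each
`z : ℂ` with `‖z‖ = 1` let `D_z` be the diagonal matrix whose `(f, f)` entry is
`z ^ |f⁻¹(1)|`.  Then the subalgebra of `M_{2^n}(ℂ)` of matrices commuting with all the
`D_z` is isomorphic as a `ℂ`-algebra to `∏_{k=0}^{n} M_{C(n,k)}(ℂ)`. -/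
theorem gicar_fixedPointAlgebra_iso_prod_matrix (n : ℕ) :
    Nonempty
      ((Subalgebra.centralizer ℂ
          {M : Matrix (Fin n → Fin 2) (Fin n → Fin 2) ℂ |
            ∃ z : ℂ, ‖z‖ = 1 ∧
              M = Matrix.diagonal
                (fun f : Fin n → Fin 2 =>
                  z ^ (Finset.univ.filter fun i => f i = 1).card)}) ≃ₐ[ℂ]
        ∀ k : Fin (n + 1), Matrix (Fin (Nat.choose n k)) (Fin (Nat.choose n k)) ℂ) := by
  refine ⟨GICAR.toBlocks.trans (AlgEquiv.piCongrRight fun k =>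
    Matrix.reindexAlgEquiv ℂ ℂ (Fintype.equivFinOfCardEq (GICAR.card_fib k)))⟩
end

section
/- Let 𝒞 be a small involutive category and V a Hilbert 𝒞-module. Fix an object m and suppose W_m and X_m are subspaces of V_m, each invariant under V(c) for every endomorphism c : m ⟶ m, and orthogonal to each other in V_m. Then for every object n, the subspace span{V(c)w : c : m ⟶ n, w ∈ W_m} of V_n is orthogonal to the subspace span{V(c)x : c : m ⟶ n, x ∈ X_m}. -/
open scoped ComplexInnerProductSpace

/-- Let `𝒞` be a small involutive category (objects `O`, hom spaces `Hom`, identities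
`idm`, composition `comp`, involution `st`) and `V` a Hilbert `𝒞`-module (the functor
`F` into finite-dimensional complex inner product spaces, satisfying
`⟪F c ξ, η⟫ = ⟪ξ, F c* η⟫`).  If `W` and `X` are orthogonal `𝒞(m,m)`-invariant
subspaces of `V m`, then for every object `n`, the span of `{F c w : c : m ⟶ n, w ∈ W}`
is orthogonal to the span of `{F c x : c : m ⟶ n, x ∈ X}`. -/
theorem hilbertModule_generated_orthogonal
    {O : Type} (Hom : O → O → Type)
    (idm : ∀ m : O, Hom m m)
    (comp : ∀ {l m n : O}, Hom l m → Hom m n → Hom l n)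
    (st : ∀ {m n : O}, Hom m n → Hom n m)
    (hst_st : ∀ {m n : O} (c : Hom m n), st (st c) = c)
    (hst_comp : ∀ {l m n : O} (c : Hom l m) (d : Hom m n),
      st (comp c d) = comp (st d) (st c))
    (hst_id : ∀ m : O, st (idm m) = idm m)
    (V : O → Type)
    [∀ m, NormedAddCommGroup (V m)] [∀ m, InnerProductSpace ℂ (V m)]
    [∀ m, FiniteDimensional ℂ (V m)]
    (F : ∀ {m n : O}, Hom m n → (V m →ₗ[ℂ] V n))
    (hF_id : ∀ m : O, F (idm m) = LinearMap.id)
    (hF_comp : ∀ {l m n : O} (c : Hom l m) (d : Hom m n),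
      F (comp c d) = (F d).comp (F c))
    (hF_adj : ∀ {m n : O} (c : Hom m n) (ξ : V m) (η : V n),
      ⟪F c ξ, η⟫ = ⟪ξ, F (st c) η⟫)
    (m : O) (W X : Submodule ℂ (V m))
    (hW : ∀ (c : Hom m m), ∀ w ∈ W, F c w ∈ W)
    (hX : ∀ (c : Hom m m), ∀ x ∈ X, F c x ∈ X)
    (hWX : ∀ w ∈ W, ∀ x ∈ X, ⟪w, x⟫ = 0) :
    ∀ n : O,
      ∀ v ∈ Submodule.span ℂ {v : V n | ∃ (c : Hom m n) (w : V m), w ∈ W ∧ v = F c w},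
      ∀ u ∈ Submodule.span ℂ {u : V n | ∃ (c : Hom m n) (x : V m), x ∈ X ∧ u = F c x},
      ⟪v, u⟫ = 0 := by

  intro n v hv u hu
  induction hv using Submodule.span_induction with
  | mem v hvmem =>
    induction hu using Submodule.span_induction with
    | mem u humem =>
      obtain ⟨c, w, hw, rfl⟩ := hvmem
      obtain ⟨d, x, hx, rfl⟩ := humem
      rw [hF_adj]
      have : F (st c) (F d x) = F (comp d (st c)) x := by
        rw [hF_comp]; rfl
      rw [this]
      exact hWX w hw _ (hX _ x hx)
    | zero => simp
    | add u₁ u₂ _ _ h1 h2 => rw [inner_add_right, h1, h2, add_zero]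
    | smul a u _ h => rw [inner_smul_right, h, mul_zero]
  | zero => simp
  | add v₁ v₂ _ _ h1 h2 => rw [inner_add_left, h1, h2, add_zero]
  | smul a v _ h => rw [inner_smul_left, h, mul_zero]
end

section
/- Let 𝒞 be a small involutive category and V a Hilbert 𝒞-module. Then V is irreducible if and only if V is indecomposable. -/
open scoped ComplexInnerProductSpace

/-- Let `𝒞` be a small involutive category and `V` a Hilbert `𝒞`-module.  Then `V` is
irreducible (every nonzero vector `ξ ∈ V m` satisfies
`span {F c ξ : c : m ⟶ n} = V n` for every `n`) if and only if `V` is indecomposable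
(whenever `W`, `X` are submodules with `W n` orthogonal to `X n` and `W n + X n = V n`
for every `n`, then `W ≡ 0` or `X ≡ 0`). -/
theorem hilbertModule_irreducible_iff_indecomposable
    {O : Type} (Hom : O → O → Type)
    (idm : ∀ m : O, Hom m m)
    (comp : ∀ {l m n : O}, Hom l m → Hom m n → Hom l n)
    (st : ∀ {m n : O}, Hom m n → Hom n m)
    (hst_st : ∀ {m n : O} (c : Hom m n), st (st c) = c)
    (hst_comp : ∀ {l m n : O} (c : Hom l m) (d : Hom m n),
      st (comp c d) = comp (st d) (st c))
    (hst_id : ∀ m : O, st (idm m) = idm m)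
    (V : O → Type)
    [∀ m, NormedAddCommGroup (V m)] [∀ m, InnerProductSpace ℂ (V m)]
    [∀ m, FiniteDimensional ℂ (V m)]
    (F : ∀ {m n : O}, Hom m n → (V m →ₗ[ℂ] V n))
    (hF_id : ∀ m : O, F (idm m) = LinearMap.id)
    (hF_comp : ∀ {l m n : O} (c : Hom l m) (d : Hom m n),
      F (comp c d) = (F d).comp (F c))
    (hF_adj : ∀ {m n : O} (c : Hom m n) (ξ : V m) (η : V n),
      ⟪F c ξ, η⟫ = ⟪ξ, F (st c) η⟫) :
    (∀ (m : O) (ξ : V m), ξ ≠ 0 → ∀ n : O,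
        Submodule.span ℂ {v : V n | ∃ c : Hom m n, v = F c ξ} = ⊤)
      ↔
    (∀ W X : ∀ m : O, Submodule ℂ (V m),
        (∀ {m n : O} (c : Hom m n), ∀ w ∈ W m, F c w ∈ W n) →
        (∀ {m n : O} (c : Hom m n), ∀ x ∈ X m, F c x ∈ X n) →
        (∀ n : O, ∀ w ∈ W n, ∀ x ∈ X n, ⟪w, x⟫ = 0) →
        (∀ n : O, W n ⊔ X n = ⊤) →
        (∀ n : O, W n = ⊥) ∨ (∀ n : O, X n = ⊥)) := by

  constructor
  · intro hIrr W X hW hX horth hsup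
    by_cases hWbot : ∀ n, W n = ⊥
    · exact Or.inl hWbot
    · right
      push_neg at hWbot
      obtain ⟨m, hm⟩ := hWbot
      obtain ⟨w, hwW, hw0⟩ := (Submodule.ne_bot_iff _).1 hm
      intro n
      have hWtop : W n = ⊤ := by
        refine top_le_iff.1 ?_
        rw [← hIrr m w hw0 n]
        refine Submodule.span_le.2 ?_
        rintro v ⟨c, rfl⟩
        exact hW c w hwW
      refine (Submodule.eq_bot_iff _).2 fun x hx => ?_
      have := horth n x (hWtop ▸ Submodule.mem_top) x hx
      exact inner_self_eq_zero.1 this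
  · intro hInd m ξ hξ n
    set W : ∀ k : O, Submodule ℂ (V k) :=
      fun k => Submodule.span ℂ {v : V k | ∃ c : Hom m k, v = F c ξ} with hWdef
    have hWstable : ∀ {k l : O} (c : Hom k l), ∀ w ∈ W k, F c w ∈ W l := by
      intro k l c w hw
      have : W k ≤ (W l).comap (F c) := by
        refine Submodule.span_le.2 ?_
        rintro v ⟨d, rfl⟩
        refine Submodule.mem_comap.2 ?_
        have : F c (F d ξ) = F (comp d c) ξ := by rw [hF_comp]; rfl
        rw [this]
        exact Submodule.subset_span ⟨comp d c, rfl⟩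
      exact this hw
    have hXstable : ∀ {k l : O} (c : Hom k l), ∀ x ∈ (W k)ᗮ, F c x ∈ (W l)ᗮ := by
      intro k l c x hx
      refine (Submodule.mem_orthogonal _ _).2 fun v hv => ?_
      have h1 : ⟪v, F c x⟫ = starRingEnd ℂ ⟪F c x, v⟫ := (inner_conj_symm _ _).symm
      rw [h1, hF_adj, inner_conj_symm]
      exact (Submodule.mem_orthogonal _ _).1 hx _ (hWstable (st c) v hv)
    have hξW : ξ ∈ W m := by
      refine Submodule.subset_span ⟨idm m, ?_⟩
      rw [hF_id]; rfl
    rcases hInd W (fun k => (W k)ᗮ) hWstable hXstable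
        (fun k w hw x hx => (Submodule.mem_orthogonal _ _).1 hx w hw)
        (fun k => Submodule.sup_orthogonal_of_hasOrthogonalProjection) with h | h
    · exact absurd ((Submodule.eq_bot_iff _).1 (h m) ξ hξW) hξ
    · exact Submodule.orthogonal_eq_bot_iff.1 (h n)
end

section
/- Let 𝒞 be a small involutive category and V a Hilbert 𝒞-module. Fix an object m and let W ⊆ V_m be a subspace invariant under V(c) for every endomorphism c : m ⟶ m, which is irreducible as a 𝒞(m,m)-module (every nonzero vector of W generates W under the operators V(c), c : m ⟶ m). For each object n set W_n = span{V(c)w : c : m ⟶ n, w ∈ W}. Then for every object n, W_n is an irreducible 𝒞(n,n)-module: every nonzero vector of W_n generates W_n under the operators V(c), c : n ⟶ n. -/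
open scoped ComplexInnerProductSpace

/-- Let `𝒞` be a small involutive category and `V` a Hilbert `𝒞`-module.  Fix an
object `m` and let `W ⊆ V m` be a subspace invariant under `F c` for every
endomorphism `c : m ⟶ m`, which is irreducible as a `𝒞(m,m)`-module.  For each object
`n`, set `W_n = span {F c w : c : m ⟶ n, w ∈ W}`.  Then every `W_n` is an irreducible
`𝒞(n,n)`-module: every nonzero vector of `W_n` generates `W_n` under the operators
`F c`, `c : n ⟶ n`. -/
theorem hilbertModule_generated_irreducible
    {O : Type} (Hom : O → O → Type)
    (idm : ∀ m : O, Hom m m)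
    (comp : ∀ {l m n : O}, Hom l m → Hom m n → Hom l n)
    (st : ∀ {m n : O}, Hom m n → Hom n m)
    (hst_st : ∀ {m n : O} (c : Hom m n), st (st c) = c)
    (hst_comp : ∀ {l m n : O} (c : Hom l m) (d : Hom m n),
      st (comp c d) = comp (st d) (st c))
    (hst_id : ∀ m : O, st (idm m) = idm m)
    (V : O → Type)
    [∀ m, NormedAddCommGroup (V m)] [∀ m, InnerProductSpace ℂ (V m)]
    [∀ m, FiniteDimensional ℂ (V m)]
    (F : ∀ {m n : O}, Hom m n → (V m →ₗ[ℂ] V n))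
    (hF_id : ∀ m : O, F (idm m) = LinearMap.id)
    (hF_comp : ∀ {l m n : O} (c : Hom l m) (d : Hom m n),
      F (comp c d) = (F d).comp (F c))
    (hF_adj : ∀ {m n : O} (c : Hom m n) (ξ : V m) (η : V n),
      ⟪F c ξ, η⟫ = ⟪ξ, F (st c) η⟫)
    (m : O) (W : Submodule ℂ (V m))
    (hW : ∀ (c : Hom m m), ∀ w ∈ W, F c w ∈ W)
    (hWirr : ∀ w ∈ W, w ≠ 0 →
      Submodule.span ℂ {v : V m | ∃ c : Hom m m, v = F c w} = W) :
    ∀ n : O, ∀ ξ ∈ Submodule.span ℂ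
        {v : V n | ∃ (c : Hom m n) (w : V m), w ∈ W ∧ v = F c w},
      ξ ≠ 0 →
      Submodule.span ℂ {v : V n | ∃ c : Hom n n, v = F c ξ} =
        Submodule.span ℂ {v : V n | ∃ (c : Hom m n) (w : V m), w ∈ W ∧ v = F c w} := by
  intro n ξ hξ hξ0
  set S : Set (V n) := {v : V n | ∃ (c : Hom m n) (w : V m), w ∈ W ∧ v = F c w} with hS
  set Wn : Submodule ℂ (V n) := Submodule.span ℂ S with hWn
  -- Step 2: for any `c : m ⟶ n`, `F (st c)` maps `Wn` into `W`.
  have hback : ∀ (c : Hom m n), ∀ v ∈ Wn, F (st c) v ∈ W := by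
    intro c v hv
    induction hv using Submodule.span_induction with
    | mem x hx =>
        obtain ⟨d, w, hw, rfl⟩ := hx
        have : F (st c) (F d w) = F (comp d (st c)) w := by
          rw [hF_comp]; rfl
        rw [this]
        exact hW _ _ hw
    | zero => simp
    | add x y _ _ hx hy => rw [map_add]; exact W.add_mem hx hy
    | smul a x _ hx => rw [map_smul]; exact W.smul_mem a hx
  -- Wn is invariant under endomorphisms of n
  have hinv : ∀ (e : Hom n n), ∀ v ∈ Wn, F e v ∈ Wn := by
    intro e v hv
    induction hv using Submodule.span_induction with
    | mem x hx =>
        obtain ⟨d, w', hw', rfl⟩ := hx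
        have : F e (F d w') = F (comp d e) w' := by rw [hF_comp]; rfl
        rw [this]
        exact Submodule.subset_span ⟨comp d e, w', hw', rfl⟩
    | zero => simp
    | add x y _ _ hx hy => rw [map_add]; exact Wn.add_mem hx hy
    | smul a x _ hx => rw [map_smul]; exact Wn.smul_mem a hx
  -- Step 3: find a generator not orthogonal to ξ.
  have hex : ∃ g ∈ S, ⟪ξ, g⟫ ≠ 0 := by
    by_contra h
    push_neg at h
    have hker : Wn ≤ LinearMap.ker (innerSL ℂ ξ).toLinearMap := by
      rw [hWn]
      refine Submodule.span_le.2 ?_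
      intro g hg
      simp [LinearMap.mem_ker, h g hg]
    have : ⟪ξ, ξ⟫ = 0 := hker hξ
    exact hξ0 (inner_self_eq_zero.mp this)
  obtain ⟨g, hgS, hg⟩ := hex
  obtain ⟨c, w, hw, rfl⟩ := hgS
  -- u := F (st c) ξ is a nonzero element of W
  set u : V m := F (st c) ξ with hu
  have huW : u ∈ W := hback c ξ hξ
  have hu0 : u ≠ 0 := by
    intro h0
    apply hg
    have h1 := hF_adj (st c) ξ w
    rw [hst_st] at h1
    rw [← h1, ← hu, h0, inner_zero_left]
  have hWu := hWirr u huW hu0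
  -- Now prove the two inclusions.
  apply le_antisymm
  · -- span {F e ξ} ≤ Wn : Wn is invariant under endomorphisms of n
    refine Submodule.span_le.2 ?_
    rintro v ⟨e, rfl⟩
    exact hinv e ξ hξ
  · -- Wn ≤ span {F e ξ}
    refine Submodule.span_le.2 ?_
    rintro v ⟨d, w', hw', rfl⟩
    -- w' ∈ W = span {F e u}, apply F d
    have hw'' : w' ∈ Submodule.span ℂ {v : V m | ∃ e : Hom m m, v = F e u} := by
      rw [hWu]; exact hw'
    have : F d w' ∈ Submodule.map (F d)
        (Submodule.span ℂ {v : V m | ∃ e : Hom m m, v = F e u}) :=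
      ⟨w', hw'', rfl⟩
    rw [Submodule.map_span] at this
    refine Submodule.span_mono ?_ this
    rintro x ⟨y, ⟨e, rfl⟩, rfl⟩
    refine ⟨comp (st c) (comp e d), ?_⟩
    rw [hF_comp, hF_comp]
    rfl
end

section
/- Let 𝒞 be a small involutive category and V a Hilbert 𝒞-module satisfying the generating property: for any two objects m, n with V_m ≠ 0 and V_n ≠ 0, there exists a morphism c : m ⟶ n with V(c) ≠ 0. Then the following are equivalent: (1) for every object m, V_m is an irreducible 𝒞(m,m)-module (every nonzero vector of V_m generates V_m under the operators V(c), c : m ⟶ m); (2) V is irreducible. -/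
open scoped ComplexInnerProductSpace

/-- Let `𝒞` be a small involutive category and `V` a Hilbert `𝒞`-module satisfying the
generating property: for any two objects `m`, `n` with `V m ≠ 0` and `V n ≠ 0`, there is
a morphism `c : m ⟶ n` with `F c ≠ 0`.  Then the following are equivalent:
(1) for every object `m`, `V m` is an irreducible `𝒞(m,m)`-module;
(2) `V` is irreducible. -/
theorem hilbertModule_allIrreducible_iff_irreducible
    {O : Type} (Hom : O → O → Type)
    (idm : ∀ m : O, Hom m m)
    (comp : ∀ {l m n : O}, Hom l m → Hom m n → Hom l n)
    (st : ∀ {m n : O}, Hom m n → Hom n m)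
    (hst_st : ∀ {m n : O} (c : Hom m n), st (st c) = c)
    (hst_comp : ∀ {l m n : O} (c : Hom l m) (d : Hom m n),
      st (comp c d) = comp (st d) (st c))
    (hst_id : ∀ m : O, st (idm m) = idm m)
    (V : O → Type)
    [∀ m, NormedAddCommGroup (V m)] [∀ m, InnerProductSpace ℂ (V m)]
    [∀ m, FiniteDimensional ℂ (V m)]
    (F : ∀ {m n : O}, Hom m n → (V m →ₗ[ℂ] V n))
    (hF_id : ∀ m : O, F (idm m) = LinearMap.id)
    (hF_comp : ∀ {l m n : O} (c : Hom l m) (d : Hom m n),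
      F (comp c d) = (F d).comp (F c))
    (hF_adj : ∀ {m n : O} (c : Hom m n) (ξ : V m) (η : V n),
      ⟪F c ξ, η⟫ = ⟪ξ, F (st c) η⟫)
    (hgen : ∀ m n : O, (∃ ξ : V m, ξ ≠ 0) → (∃ η : V n, η ≠ 0) →
      ∃ c : Hom m n, F c ≠ 0) :
    (∀ (m : O) (ξ : V m), ξ ≠ 0 →
        Submodule.span ℂ {v : V m | ∃ c : Hom m m, v = F c ξ} = ⊤)
      ↔
    (∀ (m : O) (ξ : V m), ξ ≠ 0 → ∀ n : O,
        Submodule.span ℂ {v : V n | ∃ c : Hom m n, v = F c ξ} = ⊤) := by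
  constructor
  · intro h m ξ hξ n
    by_cases hVn : ∃ η : V n, η ≠ 0
    · by_cases hc : ∃ c : Hom m n, F c ξ ≠ 0
      · obtain ⟨c, hcξ⟩ := hc
        have htop := h n (F c ξ) hcξ
        rw [eq_top_iff, ← htop]
        refine Submodule.span_le.2 ?_
        rintro v ⟨d, rfl⟩
        exact Submodule.subset_span ⟨comp c d, by rw [hF_comp]; rfl⟩
      · push_neg at hc
        obtain ⟨c₀, hc₀⟩ := hgen m n ⟨ξ, hξ⟩ hVn
        exact absurd (by
          ext ζ
          have hζ : ζ ∈ Submodule.span ℂ {v : V m | ∃ a : Hom m m, v = F a ξ} := by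
            rw [h m ξ hξ]; trivial
          have key : ∀ v ∈ Submodule.span ℂ {v : V m | ∃ a : Hom m m, v = F a ξ},
              F c₀ v = 0 := by
            intro v hv
            induction hv using Submodule.span_induction with
            | mem x hx =>
              obtain ⟨a, rfl⟩ := hx
              rw [← LinearMap.comp_apply, ← hF_comp]
              exact hc (comp a c₀)
            | zero => simp
            | add x y _ _ hx hy => simp [hx, hy]
            | smul a x _ hx => simp [hx]
          simpa using key ζ hζ) hc₀
    · push_neg at hVn
      rw [eq_top_iff]
      intro x _
      rw [hVn x]
      exact Submodule.zero_mem _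
  · intro h m ξ hξ
    exact h m ξ hξ m
end

section
/- Let 𝒞 be a small involutive category whose objects are indexed by the natural numbers, and let V be a Hilbert 𝒞-module. Then V admits an orthogonal decomposition into irreducible submodules: there is a family (W^i)_{i ∈ I} of submodules of V, each irreducible, such that for every object n the subspaces W^i_n are pairwise orthogonal in V_n and V_n is the (internal orthogonal direct) sum of the W^i_n. -/
open scoped ComplexInnerProductSpace

/-- Let `𝒞` be a small involutive category whose objects are indexed by `ℕ`, and let
`V` be a Hilbert `𝒞`-module.  Then `V` admits an orthogonal decomposition into
irreducible submodules: there is a family `(Wⁱ)_{i ∈ I}` of submodules of `V`, each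
irreducible, such that for every `n` the subspaces `Wⁱ n` are pairwise orthogonal in
`V n` and their (internal orthogonal direct) sum is all of `V n`. -/
theorem hilbertModule_decomposition_into_irreducibles
    (Hom : ℕ → ℕ → Type)
    (idm : ∀ m : ℕ, Hom m m)
    (comp : ∀ {l m n : ℕ}, Hom l m → Hom m n → Hom l n)
    (st : ∀ {m n : ℕ}, Hom m n → Hom n m)
    (hst_st : ∀ {m n : ℕ} (c : Hom m n), st (st c) = c)
    (hst_comp : ∀ {l m n : ℕ} (c : Hom l m) (d : Hom m n),
      st (comp c d) = comp (st d) (st c))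
    (hst_id : ∀ m : ℕ, st (idm m) = idm m)
    (V : ℕ → Type)
    [∀ m, NormedAddCommGroup (V m)] [∀ m, InnerProductSpace ℂ (V m)]
    [∀ m, FiniteDimensional ℂ (V m)]
    (F : ∀ {m n : ℕ}, Hom m n → (V m →ₗ[ℂ] V n))
    (hF_id : ∀ m : ℕ, F (idm m) = LinearMap.id)
    (hF_comp : ∀ {l m n : ℕ} (c : Hom l m) (d : Hom m n),
      F (comp c d) = (F d).comp (F c))
    (hF_adj : ∀ {m n : ℕ} (c : Hom m n) (ξ : V m) (η : V n),
      ⟪F c ξ, η⟫ = ⟪ξ, F (st c) η⟫) :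
    ∃ (I : Type) (W : I → ∀ n : ℕ, Submodule ℂ (V n)),
      -- each `W i` is a submodule of `V`
      (∀ (i : I) {m n : ℕ} (c : Hom m n), ∀ w ∈ W i m, F c w ∈ W i n) ∧
      -- each `W i` is irreducible
      (∀ (i : I) (m : ℕ), ∀ ξ ∈ W i m, ξ ≠ 0 → ∀ n : ℕ,
        Submodule.span ℂ {v : V n | ∃ c : Hom m n, v = F c ξ} = W i n) ∧
      -- the `W i` are pairwise orthogonal
      (∀ i j : I, i ≠ j → ∀ n : ℕ, ∀ w ∈ W i n, ∀ x ∈ W j n, ⟪w, x⟫ = 0) ∧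
      -- and they sum to all of `V`
      (∀ n : ℕ, (⨆ i : I, W i n) = ⊤) := by
  classical
  -- orthogonality to a span from orthogonality to generators
  have span_orth : ∀ (k : ℕ) (s : Set (V k)) (w : V k), (∀ x ∈ s, ⟪x, w⟫ = (0:ℂ)) →
      ∀ u ∈ Submodule.span ℂ s, ⟪u, w⟫ = (0:ℂ) := by
    intro k s w hs u hu
    induction hu using Submodule.span_induction with
    | mem x hx => exact hs x hx
    | zero => simp
    | add x y hx hy ihx ihy => rw [inner_add_left, ihx, ihy, add_zero]
    | smul a x hx ih => rw [inner_smul_left, ih, mul_zero]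
  -- the collection of good sets of submodule families
  set 𝒮 : Set (Set (∀ n : ℕ, Submodule ℂ (V n))) :=
    {S | (∀ W ∈ S,
          (∀ (m n : ℕ) (c : Hom m n), ∀ w ∈ W m, F c w ∈ W n) ∧
          (∀ m : ℕ, ∀ ξ ∈ W m, ξ ≠ 0 → ∀ n : ℕ,
            Submodule.span ℂ {v : V n | ∃ c : Hom m n, v = F c ξ} = W n)) ∧
      (∀ W ∈ S, ∀ X ∈ S, W ≠ X → ∀ n : ℕ, ∀ w ∈ W n, ∀ x ∈ X n, ⟪w, x⟫ = (0:ℂ))}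
    with h𝒮
  obtain ⟨S, hSmax⟩ : ∃ S, Maximal (· ∈ 𝒮) S := by
    apply zorn_subset
    intro c hc hchain
    refine ⟨⋃₀ c, ⟨?_, ?_⟩, fun s hs => Set.subset_sUnion_of_mem hs⟩
    · rintro W ⟨s, hs, hWs⟩
      exact (hc hs).1 W hWs
    · rintro W ⟨s, hs, hWs⟩ X ⟨t, ht, hXt⟩ hWX
      rcases hchain.total hs ht with h | h
      · exact (hc ht).2 W (h hWs) X hXt hWX
      · exact (hc hs).2 W hWs X (h hXt) hWX
  have hS𝒮 : S ∈ 𝒮 := hSmax.1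
  -- the total sum
  set T : ∀ n : ℕ, Submodule ℂ (V n) := fun n => ⨆ i : ↥S, i.1 n with hTdef
  have hT : ∀ (m n : ℕ) (c : Hom m n), ∀ w ∈ T m, F c w ∈ T n := by
    intro m n c w hw
    have hle : Submodule.map (F c) (T m) ≤ T n := by
      rw [hTdef, Submodule.map_iSup]
      exact iSup_mono fun i => Submodule.map_le_iff_le_comap.mpr
        (fun x hx => (hS𝒮.1 i.1 i.2).1 m n c x hx)
    exact hle ⟨w, hw, rfl⟩
  -- the orthogonal complement family is a submodule family
  have hY : ∀ (m n : ℕ) (c : Hom m n), ∀ y ∈ (T m)ᗮ, F c y ∈ (T n)ᗮ := by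
    intro m n c y hy
    rw [Submodule.mem_orthogonal]
    intro u hu
    have h1 : ⟪F c y, u⟫ = (0:ℂ) := by
      rw [hF_adj]
      exact (Submodule.mem_orthogonal' _ _).1 hy _ (hT n m (st c) u hu)
    exact inner_eq_zero_symm.mp h1
  -- the sum is everything
  have hTtop : ∀ n : ℕ, T n = ⊤ := by
    by_contra hcon
    push_neg at hcon
    obtain ⟨n₀, hn₀⟩ := hcon
    have hbot : (T n₀)ᗮ ≠ ⊥ := fun h => hn₀ (Submodule.orthogonal_eq_bot_iff.mp h)
    -- a minimal nonzero invariant subspace of (T n₀)ᗮ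
    obtain ⟨U, ⟨hU0, hUY, hUinv⟩, hUmin⟩ :=
      IsArtinian.set_has_minimal
        {U : Submodule ℂ (V n₀) | U ≠ ⊥ ∧ U ≤ (T n₀)ᗮ ∧
          ∀ c : Hom n₀ n₀, ∀ u ∈ U, F c u ∈ U}
        ⟨(T n₀)ᗮ, hbot, le_rfl, fun c u hu => hY n₀ n₀ c u hu⟩
    -- the submodule family generated by U
    set G : ∀ n : ℕ, Submodule ℂ (V n) := fun n =>
      Submodule.span ℂ {v : V n | ∃ (c : Hom n₀ n) (u : V n₀), u ∈ U ∧ v = F c u} with hGdef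
    have hGsub : ∀ (m n : ℕ) (c : Hom m n), ∀ w ∈ G m, F c w ∈ G n := by
      intro m n c w hw
      have hle : Submodule.map (F c) (G m) ≤ G n := by
        rw [hGdef, Submodule.map_span]
        apply Submodule.span_le.mpr
        rintro v ⟨x, ⟨d, u, hu, rfl⟩, rfl⟩
        exact Submodule.subset_span ⟨comp d c, u, hu, by rw [hF_comp]; rfl⟩
      exact hle ⟨w, hw, rfl⟩
    have hGn₀ : G n₀ = U := by
      apply le_antisymm
      · apply Submodule.span_le.mpr
        rintro v ⟨c, u, hu, rfl⟩
        exact hUinv c u hu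
      · intro u hu
        exact Submodule.subset_span ⟨idm n₀, u, hu, by rw [hF_id]; rfl⟩
    have hGY : ∀ n : ℕ, G n ≤ (T n)ᗮ := by
      intro n
      apply Submodule.span_le.mpr
      rintro v ⟨c, u, hu, rfl⟩
      exact hY n₀ n c u (hUY hu)
    -- G is irreducible
    have hGirr : ∀ m : ℕ, ∀ ξ ∈ G m, ξ ≠ 0 → ∀ n : ℕ,
        Submodule.span ℂ {v : V n | ∃ c : Hom m n, v = F c ξ} = G n := by
      intro m ξ hξG hξ0 n
      set X : ∀ k : ℕ, Submodule ℂ (V k) := fun k =>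
        Submodule.span ℂ {v : V k | ∃ c : Hom m k, v = F c ξ} with hXdef
      have hXsub : ∀ (k l : ℕ) (c : Hom k l), ∀ w ∈ X k, F c w ∈ X l := by
        intro k l c w hw
        have hle : Submodule.map (F c) (X k) ≤ X l := by
          rw [hXdef, Submodule.map_span]
          apply Submodule.span_le.mpr
          rintro v ⟨x, ⟨d, rfl⟩, rfl⟩
          exact Submodule.subset_span ⟨comp d c, by rw [hF_comp]; rfl⟩
        exact hle ⟨w, hw, rfl⟩
      have hXG : ∀ k : ℕ, X k ≤ G k := by
        intro k
        apply Submodule.span_le.mpr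
        rintro v ⟨c, rfl⟩
        exact hGsub m k c ξ hξG
      by_cases hX0 : X n₀ = ⊥
      · exfalso
        apply hξ0
        have hξorth : ξ ∈ (G m)ᗮ := by
          rw [Submodule.mem_orthogonal]
          intro u hu
          refine span_orth m _ ξ ?_ u hu
          rintro x ⟨c, u', hu', rfl⟩
          rw [hF_adj]
          have hmem : F (st c) ξ ∈ X n₀ := Submodule.subset_span ⟨st c, rfl⟩
          rw [hX0] at hmem
          rw [(Submodule.mem_bot ℂ).mp hmem, inner_zero_right]
        have : ξ ∈ (⊥ : Submodule ℂ (V m)) :=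
          (Submodule.orthogonal_disjoint (G m)).le_bot
            (Submodule.mem_inf.mpr ⟨hξG, hξorth⟩)
        exact (Submodule.mem_bot ℂ).mp this
      · have hXU : X n₀ = U := by
          have hXle : X n₀ ≤ U := hGn₀ ▸ hXG n₀
          by_contra hne
          exact hUmin (X n₀)
            ⟨hX0, le_trans hXle (hGn₀ ▸ hGY n₀), fun c u hu => hXsub n₀ n₀ c u hu⟩
            (lt_of_le_of_ne hXle hne)
        apply le_antisymm (hXG n)
        apply Submodule.span_le.mpr
        rintro v ⟨c, u, hu, rfl⟩
        exact hXsub n₀ n c u (hXU ▸ hu)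
    -- insert G into S to contradict maximality
    have hGmem : insert G S ∈ 𝒮 := by
      constructor
      · rintro W (rfl | hW)
        · exact ⟨hGsub, hGirr⟩
        · exact hS𝒮.1 W hW
      · rintro W (rfl | hW) X (rfl | hX) hWX n w hw x hx
        · exact absurd rfl hWX
        · have hxT : x ∈ T n := le_iSup (fun i : ↥S => i.1 n) ⟨X, hX⟩ hx
          exact (Submodule.mem_orthogonal' _ _).1 (hGY n hw) x hxT
        · have hwT : w ∈ T n := le_iSup (fun i : ↥S => i.1 n) ⟨W, hW⟩ hw
          exact (Submodule.mem_orthogonal _ _).1 (hGY n hx) w hwT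
        · exact hS𝒮.2 W hW X hX hWX n w hw x hx
    have hGS : G ∈ S := hSmax.2 hGmem (Set.subset_insert G S) (Set.mem_insert G S)
    have hGT : G n₀ ≤ T n₀ := le_iSup (fun i : ↥S => i.1 n₀) ⟨G, hGS⟩
    have : G n₀ = ⊥ :=
      (Submodule.eq_bot_iff _).mpr fun x hx => (Submodule.mem_bot ℂ).mp
        ((Submodule.orthogonal_disjoint (T n₀)).le_bot
          (Submodule.mem_inf.mpr ⟨hGT hx, hGY n₀ hx⟩))
    exact hU0 (hGn₀ ▸ this)
  -- assemble the answer
  refine ⟨↥S, fun i => i.1, ?_, ?_, ?_, ?_⟩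
  · intro i m n c w hw
    exact (hS𝒮.1 i.1 i.2).1 m n c w hw
  · intro i m ξ hξ hξ0 n
    exact (hS𝒮.1 i.1 i.2).2 m ξ hξ hξ0 n
  · intro i j hij n w hw x hx
    exact hS𝒮.2 i.1 i.2 j.1 j.2 (fun h => hij (Subtype.ext h)) n w hw x hx
  · exact hTtop
end

section
/- Let 𝒞 be a small involutive category and let V, W be Hilbert 𝒞-modules with V irreducible. Fix an object m and let θ : V_m → W_m be a nonzero linear map intertwining the actions of all endomorphisms of m (θ ∘ V(c) = W(c) ∘ θ for all c : m ⟶ m). Then θ extends uniquely to a homomorphism of Hilbert 𝒞-modules, i.e., there is a unique family of linear maps Θ_n : V_n → W_n (over all objects n) with Θ_m = θ and Θ_n ∘ V(c) = W(c) ∘ Θ_{n'} for every morphism c : n' ⟶ n; moreover each Θ_n is injective. -/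
open scoped ComplexInnerProductSpace

/-- Let `𝒞` be a small involutive category and `V`, `W` Hilbert `𝒞`-modules (given by
functors `F`, `G` into finite-dimensional complex inner product spaces) with `V`
irreducible.  Fix an object `m` and let `θ : V m → W m` be a nonzero linear map
intertwining the actions of all endomorphisms of `m`.  Then `θ` extends uniquely to a
homomorphism of Hilbert `𝒞`-modules, i.e. there is a unique family of linear maps
`Θ n : V n → W n` with `Θ m = θ` commuting with the actions of all morphisms; moreover
each `Θ n` is injective. -/
theorem hilbertModule_extend_morphism
    {O : Type} (Hom : O → O → Type)
    (idm : ∀ m : O, Hom m m)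
    (comp : ∀ {l m n : O}, Hom l m → Hom m n → Hom l n)
    (st : ∀ {m n : O}, Hom m n → Hom n m)
    (hst_st : ∀ {m n : O} (c : Hom m n), st (st c) = c)
    (hst_comp : ∀ {l m n : O} (c : Hom l m) (d : Hom m n),
      st (comp c d) = comp (st d) (st c))
    (hst_id : ∀ m : O, st (idm m) = idm m)
    (V : O → Type)
    [∀ m, NormedAddCommGroup (V m)] [∀ m, InnerProductSpace ℂ (V m)]
    [∀ m, FiniteDimensional ℂ (V m)]
    (F : ∀ {m n : O}, Hom m n → (V m →ₗ[ℂ] V n))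
    (hF_id : ∀ m : O, F (idm m) = LinearMap.id)
    (hF_comp : ∀ {l m n : O} (c : Hom l m) (d : Hom m n),
      F (comp c d) = (F d).comp (F c))
    (hF_adj : ∀ {m n : O} (c : Hom m n) (ξ : V m) (η : V n),
      ⟪F c ξ, η⟫ = ⟪ξ, F (st c) η⟫)
    (W : O → Type)
    [∀ m, NormedAddCommGroup (W m)] [∀ m, InnerProductSpace ℂ (W m)]
    [∀ m, FiniteDimensional ℂ (W m)]
    (G : ∀ {m n : O}, Hom m n → (W m →ₗ[ℂ] W n))
    (hG_id : ∀ m : O, G (idm m) = LinearMap.id)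
    (hG_comp : ∀ {l m n : O} (c : Hom l m) (d : Hom m n),
      G (comp c d) = (G d).comp (G c))
    (hG_adj : ∀ {m n : O} (c : Hom m n) (ξ : W m) (η : W n),
      ⟪G c ξ, η⟫ = ⟪ξ, G (st c) η⟫)
    (hVirr : ∀ (m : O) (ξ : V m), ξ ≠ 0 → ∀ n : O,
      Submodule.span ℂ {v : V n | ∃ c : Hom m n, v = F c ξ} = ⊤)
    (m : O) (θ : V m →ₗ[ℂ] W m) (hθ : θ ≠ 0)
    (hθint : ∀ c : Hom m m, θ.comp (F c) = (G c).comp θ) :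
    ∃ Θ : ∀ n : O, V n →ₗ[ℂ] W n,
      (Θ m = θ ∧
        ∀ {n' n : O} (c : Hom n' n), (Θ n).comp (F c) = (G c).comp (Θ n')) ∧
      (∀ n : O, Function.Injective (Θ n)) ∧
      (∀ Θ' : ∀ n : O, V n →ₗ[ℂ] W n,
        Θ' m = θ →
        (∀ {n' n : O} (c : Hom n' n), (Θ' n).comp (F c) = (G c).comp (Θ' n')) →
        Θ' = Θ) := by
  classical
  -- pointwise intertwining at m
  have hθint' : ∀ (c : Hom m m) (ξ : V m), θ (F c ξ) = G c (θ ξ) := fun c ξ =>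
    LinearMap.congr_fun (hθint c) ξ
  -- a vector not killed by θ
  obtain ⟨ξ₀, hξ₀⟩ : ∃ ξ : V m, θ ξ ≠ 0 := by
    by_contra h
    push_neg at h
    exact hθ (LinearMap.ext h)
  have hξ₀0 : ξ₀ ≠ 0 := by
    intro h
    apply hξ₀
    rw [h, map_zero]
  haveI : Nontrivial (V m) := ⟨ξ₀, 0, hξ₀0⟩
  -- T = θ* θ commutes with the action of End(m)
  set T : V m →ₗ[ℂ] V m := (LinearMap.adjoint θ).comp θ with hTdef
  have hTcomm : ∀ (c : Hom m m) (ξ : V m), T (F c ξ) = F c (T ξ) := by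
    intro c ξ
    apply ext_inner_right ℂ
    intro η
    have h1 : (⟪T (F c ξ), η⟫ : ℂ) = ⟪θ (F c ξ), θ η⟫ := by
      simp [hTdef, LinearMap.adjoint_inner_left]
    have h2 : (⟪F c (T ξ), η⟫ : ℂ) = ⟪θ ξ, θ (F (st c) η)⟫ := by
      rw [hF_adj]
      simp [hTdef, LinearMap.adjoint_inner_left]
    rw [h1, h2, hθint' c ξ, hG_adj, hθint' (st c) η]
  -- T is a scalar μ
  obtain ⟨μ, hμ⟩ := Module.End.exists_eigenvalue T
  obtain ⟨ξ₁, hξ₁⟩ := hμ.exists_hasEigenvector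
  have hTξ₁ : T ξ₁ = μ • ξ₁ := hξ₁.apply_eq_smul
  have hTeq : ∀ ξ : V m, T ξ = μ • ξ := by
    have hsub : Submodule.span ℂ {v : V m | ∃ c : Hom m m, v = F c ξ₁} ≤
        LinearMap.ker (T - μ • (LinearMap.id : V m →ₗ[ℂ] V m)) := by
      apply Submodule.span_le.2
      rintro v ⟨c, rfl⟩
      simp only [SetLike.mem_coe, LinearMap.mem_ker, LinearMap.sub_apply,
        LinearMap.smul_apply, LinearMap.id_apply]
      rw [hTcomm c ξ₁, hTξ₁, map_smul, sub_self]
    rw [hVirr m ξ₁ hξ₁.2 m, top_le_iff] at hsub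
    intro ξ
    have : ξ ∈ LinearMap.ker (T - μ • (LinearMap.id : V m →ₗ[ℂ] V m)) := by
      rw [hsub]; trivial
    simpa [sub_eq_zero] using this
  -- key inner-product identity for θ
  have hkey : ∀ a b : V m, (⟪θ a, θ b⟫ : ℂ) = μ * ⟪a, b⟫ := by
    intro a b
    rw [← LinearMap.adjoint_inner_right]
    have : (LinearMap.adjoint θ) (θ b) = T b := rfl
    rw [this, hTeq, inner_smul_right]
  have hμ0 : μ ≠ 0 := by
    intro h
    apply hξ₀
    rw [← inner_self_eq_zero (𝕜 := ℂ), hkey, h, zero_mul]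
  -- key identity for translated vectors
  have hkey2 : ∀ {n : O} (c d : Hom m n) (ξ η : V m),
      (⟪G c (θ ξ), G d (θ η)⟫ : ℂ) = μ * ⟪F c ξ, F d η⟫ := by
    intro n c d ξ η
    have hL : (⟪G c (θ ξ), G d (θ η)⟫ : ℂ) = ⟪θ ξ, θ (F (comp d (st c)) η)⟫ := by
      rw [hG_adj, hθint' (comp d (st c)) η, hG_comp]
      rfl
    have hR : (⟪F c ξ, F d η⟫ : ℂ) = ⟪ξ, F (comp d (st c)) η⟫ := by
      rw [hF_adj, hF_comp]
      rfl
    rw [hL, hR, hkey]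
  -- the linear maps α, β from finitely supported families
  set α : ∀ n : O, (Hom m n →₀ V m) →ₗ[ℂ] V n :=
    fun n => Finsupp.lsum ℂ (fun c : Hom m n => F c) with hαdef
  set β : ∀ n : O, (Hom m n →₀ V m) →ₗ[ℂ] W n :=
    fun n => Finsupp.lsum ℂ (fun c : Hom m n => (G c).comp θ) with hβdef
  have hαapp : ∀ (n : O) (p : Hom m n →₀ V m),
      α n p = ∑ c ∈ p.support, F c (p c) := by
    intro n p; rw [hαdef]; rfl
  have hβapp : ∀ (n : O) (p : Hom m n →₀ V m),
      β n p = ∑ c ∈ p.support, G c (θ (p c)) := by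
    intro n p; rw [hβdef]; rfl
  have hkey3 : ∀ (n : O) (p q : Hom m n →₀ V m),
      (⟪β n p, β n q⟫ : ℂ) = μ * ⟪α n p, α n q⟫ := by
    intro n p q
    rw [hαapp, hαapp, hβapp, hβapp, sum_inner, sum_inner, Finset.mul_sum]
    refine Finset.sum_congr rfl fun c hc => ?_
    rw [inner_sum, inner_sum, Finset.mul_sum]
    exact Finset.sum_congr rfl fun d hd => hkey2 c d (p c) (q d)
  have hker : ∀ (n : O) (p : Hom m n →₀ V m), α n p = 0 → β n p = 0 := by
    intro n p hp
    rw [← inner_self_eq_zero (𝕜 := ℂ), hkey3, hp, inner_zero_right, mul_zero]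
  have hαsurj : ∀ n : O, Function.Surjective (α n) := by
    intro n
    rw [← LinearMap.range_eq_top, ← top_le_iff, ← hVirr m ξ₀ hξ₀0 n]
    apply Submodule.span_le.2
    rintro v ⟨c, rfl⟩
    exact ⟨Finsupp.single c ξ₀, by simp only [hαdef]; exact Finsupp.lsum_single (S := ℂ) _ _ _⟩
  -- section of α
  set s : ∀ n : O, V n → (Hom m n →₀ V m) :=
    fun n => Function.surjInv (hαsurj n) with hsdef
  have hs : ∀ (n : O) (v : V n), α n (s n v) = v := fun n =>
    Function.surjInv_eq (hαsurj n)
  have hbs : ∀ (n : O) (p : Hom m n →₀ V m), β n (s n (α n p)) = β n p := by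
    intro n p
    have h0 : α n (s n (α n p) - p) = 0 := by rw [map_sub, hs, sub_self]
    have h1 := hker n _ h0
    rw [map_sub, sub_eq_zero] at h1
    exact h1
  -- construct Θ
  set Θ : ∀ n : O, V n →ₗ[ℂ] W n := fun n =>
    { toFun := fun v => β n (s n v)
      map_add' := fun v w => by
        have h1 : v + w = α n (s n v + s n w) := by rw [map_add, hs, hs]
        rw [h1, hbs, map_add]
      map_smul' := fun a v => by
        have h1 : a • v = α n (a • s n v) := by rw [(α n).map_smul, hs]
        rw [h1, hbs, (β n).map_smul]
        rfl } with hΘdef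
  have hΘα : ∀ (n : O) (p : Hom m n →₀ V m), Θ n (α n p) = β n p := fun n p =>
    hbs n p
  have hΘsingle : ∀ {n : O} (c : Hom m n) (ξ : V m), Θ n (F c ξ) = G c (θ ξ) := by
    intro n c ξ
    have h1 : F c ξ = α n (Finsupp.single c ξ) := by
      simp only [hαdef]; exact (Finsupp.lsum_single (S := ℂ) _ _ _).symm
    rw [h1, hΘα]
    simp only [hβdef]
    exact Finsupp.lsum_single (S := ℂ) _ _ _
  refine ⟨Θ, ⟨?_, ?_⟩, ?_, ?_⟩
  · -- Θ m = θ
    apply LinearMap.ext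
    intro v
    obtain ⟨p, rfl⟩ := hαsurj m v
    rw [hΘα, hβapp, hαapp, map_sum]
    exact Finset.sum_congr rfl fun c hc => (hθint' c (p c)).symm
  · -- intertwining
    intro n' n c
    rw [← LinearMap.cancel_right (hαsurj n')]
    apply Finsupp.lhom_ext
    intro d ξ
    have h1 : α n' (Finsupp.single d ξ) = F d ξ := by
      simp only [hαdef]; exact Finsupp.lsum_single (S := ℂ) _ _ _
    simp only [LinearMap.comp_apply, h1]
    rw [hΘsingle d ξ]
    have h2 : F c (F d ξ) = F (comp d c) ξ := by rw [hF_comp]; rfl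
    have h3 : G c (G d (θ ξ)) = G (comp d c) (θ ξ) := by rw [hG_comp]; rfl
    rw [h2, h3, hΘsingle]
  · -- injectivity
    intro n
    rw [← LinearMap.ker_eq_bot]
    rw [LinearMap.ker_eq_bot']
    intro v hv
    obtain ⟨p, rfl⟩ := hαsurj n v
    rw [hΘα] at hv
    have h1 : (0 : ℂ) = μ * ⟪α n p, α n p⟫ := by
      rw [← hkey3, hv, inner_zero_left]
    rw [← inner_self_eq_zero (𝕜 := ℂ)]
    rcases mul_eq_zero.mp h1.symm with h | h
    · exact absurd h hμ0
    · exact h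
  · -- uniqueness
    intro Θ' hΘ'm hΘ'int
    funext n
    apply LinearMap.ext
    intro v
    obtain ⟨p, rfl⟩ := hαsurj n v
    rw [hΘα, hβapp, hαapp, map_sum]
    refine Finset.sum_congr rfl fun c hc => ?_
    have := LinearMap.congr_fun (hΘ'int c) (p c)
    simp only [LinearMap.comp_apply] at this
    rw [this, hΘ'm]
end
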